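/- Let ξ > 0 and κ > 0 be real constants and c ∈ ℝ. Suppose ε : ℝ → ℝ is differentiable on [0,∞), continuous, and satisfies the linear-noise-perturbed error dynamics ε'(t) = -ξ·ε(t) - κ·∫₀ᵗ ε(s) ds + c·t for all t ≥ 0. Then ε(t) tends to c/κ as t → ∞; in particular the steady-state residual error is bounded, with limiting magnitude |c|/κ. -/

import Mathlib

open MeasureTheory intervalIntegral Filter

/-- **Linear-noise steady-state error**: for constant coefficients `ξ > 0`,
`κ > 0` and linear noise `ϑ(t) = c·t`, any solution of the perturbed error
dynamics `ε'(t) = -ξ·ε(t) - κ·∫₀ᵗ ε(s) ds + c·t` on `[0, ∞)` converges to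
`c/κ`; in particular the steady-state residual error is tightly bounded, with
limiting magnitude `|c|/κ`. -/
theorem aztnd_linear_noise_bounded_error
    (ξ κ c : ℝ) (hξ : 0 < ξ) (hκ : 0 < κ)
    (ε : ℝ → ℝ) (hεc : Continuous ε)
    (hdyn : ∀ t : ℝ, 0 ≤ t →
      HasDerivAt ε (-ξ * ε t - κ * (∫ s in (0:ℝ)..t, ε s) + c * t) t) :
    Tendsto ε atTop (nhds (c / κ)) ∧
      Tendsto (fun t : ℝ => |ε t|) atTop (nhds (|c| / κ)) := by
  have hκ' : κ ≠ 0 := ne_of_gt hκ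
  -- the integral and the shifted variables
  set y : ℝ → ℝ := fun t => ∫ s in (0:ℝ)..t, ε s with hy_def
  have hy : ∀ t : ℝ, HasDerivAt y (ε t) t := fun t =>
    integral_hasDerivAt_right (hεc.intervalIntegrable 0 t)
      hεc.stronglyMeasurable.stronglyMeasurableAtFilter hεc.continuousAt
  set v : ℝ → ℝ := fun t => y t - c / κ * t + ξ * c / κ ^ 2 with hv_def
  set b : ℝ → ℝ := fun t => ε t - c / κ with hb_def
  have hv : ∀ t : ℝ, HasDerivAt v (b t) t := by
    intro t
    have h := ((hy t).sub ((hasDerivAt_id t).const_mul (c / κ))).add_const (ξ * c / κ ^ 2)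
    refine h.congr_deriv ?_
    simp [hb_def]
  have hb : ∀ t : ℝ, 0 ≤ t → HasDerivAt b (-ξ * b t - κ * v t) t := by
    intro t ht
    have h := (hdyn t ht).sub_const (c / κ)
    refine h.congr_deriv ?_
    simp only [hb_def, hv_def, hy_def]
    field_simp
    ring
  -- continuity
  have hyd : Differentiable ℝ y := fun t => (hy t).differentiableAt
  have hyc : Continuous y := hyd.continuous
  have hvc : Continuous v :=
    (hyc.sub (continuous_const.mul continuous_id)).add continuous_const
  have hbc : Continuous b := hεc.sub continuous_const
  -- constants
  set δ : ℝ := min (κ / (2 * ξ)) (ξ / 4) with hδ_def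
  have hδ0 : 0 < δ := lt_min (by positivity) (by positivity)
  have hδ1 : δ ≤ κ / (2 * ξ) := min_le_left _ _
  have hδ2 : δ ≤ ξ / 4 := min_le_right _ _
  have hδξ : δ * ξ ≤ κ / 2 := by
    calc δ * ξ ≤ κ / (2 * ξ) * ξ := mul_le_mul_of_nonneg_right hδ1 hξ.le
      _ = κ / 2 := by field_simp
  have hδsq : δ ^ 2 ≤ κ / 8 := by
    have h1 : δ * δ ≤ (κ / (2 * ξ)) * (ξ / 4) :=
      mul_le_mul hδ1 hδ2 hδ0.le (by positivity)
    have h2 : (κ / (2 * ξ)) * (ξ / 4) = κ / 8 := by field_simp; ring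
    nlinarith [h1]
  have hα0 : 0 < 2 * δ / 3 := by positivity
  -- Lyapunov function
  set W : ℝ → ℝ := fun t => b t * b t / 2 + κ * (v t * v t) / 2 + δ * (v t * b t) with hW_def
  have hWd : ∀ t : ℝ, 0 ≤ t → HasDerivAt W
      (((-ξ * b t - κ * v t) * b t + b t * (-ξ * b t - κ * v t)) / 2
        + κ * (b t * v t + v t * b t) / 2
        + δ * (b t * b t + v t * (-ξ * b t - κ * v t))) t := by
    intro t ht
    exact (((((hb t ht).mul (hb t ht)).div_const 2).add
      ((((hv t).mul (hv t)).const_mul κ).div_const 2)).add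
      (((hv t).mul (hb t ht)).const_mul δ))
  -- the key pointwise inequality
  have hkey : ∀ a bb : ℝ,
      ((-ξ * bb - κ * a) * bb + bb * (-ξ * bb - κ * a)) / 2
        + κ * (bb * a + a * bb) / 2
        + δ * (bb * bb + a * (-ξ * bb - κ * a))
        + 2 * δ / 3 * (bb * bb / 2 + κ * (a * a) / 2 + δ * (a * bb)) ≤ 0 := by
    intro a bb
    have hμ0 : (0:ℝ) < ξ - 2 * δ / 3 := by linarith
    have hsq : 0 ≤ (ξ - 2 * δ / 3) * (bb / 2 + δ * a) ^ 2 :=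
      mul_nonneg hμ0.le (sq_nonneg _)
    have hcube : δ * (δ * ξ) ≤ δ * (κ / 2) := mul_le_mul_of_nonneg_left hδξ hδ0.le
    have hd3 : (0:ℝ) ≤ δ * δ * δ := by positivity
    have hA : (0:ℝ) ≤ (3 * ξ / 4 - 7 * δ / 6) * bb ^ 2 :=
      mul_nonneg (by linarith) (sq_nonneg bb)
    have hB : (0:ℝ) ≤ (2 * δ * κ / 3 - (ξ - 2 * δ / 3) * δ ^ 2) * a ^ 2 := by
      apply mul_nonneg _ (sq_nonneg a)
      have hδκ : (0:ℝ) ≤ δ * κ := mul_nonneg hδ0.le hκ.le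
      nlinarith [hcube, hd3, hδκ]
    nlinarith [hsq, hA, hB]
  -- the weighted function g = W * exp((2δ/3) t) is antitone on [0,∞)
  set g : ℝ → ℝ := fun t => W t * Real.exp (2 * δ / 3 * t) with hg_def
  have hexp : ∀ t : ℝ, HasDerivAt (fun s => Real.exp (2 * δ / 3 * s))
      (Real.exp (2 * δ / 3 * t) * (2 * δ / 3)) t := by
    intro t
    simpa using (((hasDerivAt_id t).const_mul (2 * δ / 3)).exp)
  have hgd : ∀ t : ℝ, 0 ≤ t → HasDerivAt g
      ((((-ξ * b t - κ * v t) * b t + b t * (-ξ * b t - κ * v t)) / 2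
        + κ * (b t * v t + v t * b t) / 2
        + δ * (b t * b t + v t * (-ξ * b t - κ * v t))) * Real.exp (2 * δ / 3 * t)
        + W t * (Real.exp (2 * δ / 3 * t) * (2 * δ / 3))) t := by
    intro t ht
    exact (hWd t ht).mul (hexp t)
  have hWc : Continuous W :=
    (((hbc.mul hbc).div_const 2).add ((continuous_const.mul (hvc.mul hvc)).div_const 2)).add
      (continuous_const.mul (hvc.mul hbc))
  have hgc : Continuous g :=
    hWc.mul (Real.continuous_exp.comp (continuous_const.mul continuous_id))
  have hanti : AntitoneOn g (Set.Ici (0:ℝ)) := by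
    apply antitoneOn_of_deriv_nonpos (convex_Ici 0) hgc.continuousOn
    · intro t ht
      rw [interior_Ici] at ht
      exact (hgd t (le_of_lt ht)).differentiableAt.differentiableWithinAt
    · intro t ht
      rw [interior_Ici] at ht
      rw [(hgd t (le_of_lt ht)).deriv]
      have hk := hkey (v t) (b t)
      have heq : (((-ξ * b t - κ * v t) * b t + b t * (-ξ * b t - κ * v t)) / 2
          + κ * (b t * v t + v t * b t) / 2
          + δ * (b t * b t + v t * (-ξ * b t - κ * v t))) * Real.exp (2 * δ / 3 * t)
          + W t * (Real.exp (2 * δ / 3 * t) * (2 * δ / 3))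
          = (((-ξ * b t - κ * v t) * b t + b t * (-ξ * b t - κ * v t)) / 2
          + κ * (b t * v t + v t * b t) / 2
          + δ * (b t * b t + v t * (-ξ * b t - κ * v t))
          + 2 * δ / 3 * (b t * b t / 2 + κ * (v t * v t) / 2 + δ * (v t * b t)))
            * Real.exp (2 * δ / 3 * t) := by
        simp only [hW_def]; ring
      rw [heq]
      exact mul_nonpos_of_nonpos_of_nonneg hk (Real.exp_nonneg _)
  -- decay of W
  have hWdecay : ∀ t : ℝ, 0 ≤ t → W t ≤ W 0 * Real.exp (-(2 * δ / 3 * t)) := by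
    intro t ht
    have h := hanti Set.self_mem_Ici (Set.mem_Ici.mpr ht) ht
    have hg0 : g 0 = W 0 := by simp [hg_def]
    rw [hg0] at h
    have hexp' : 0 < Real.exp (2 * δ / 3 * t) := Real.exp_pos _
    have hWt : W t = g t * Real.exp (-(2 * δ / 3 * t)) := by
      simp only [hg_def]
      rw [mul_assoc, ← Real.exp_add]
      simp
    rw [hWt]
    exact mul_le_mul_of_nonneg_right h (Real.exp_nonneg _)
  -- lower bound for W
  have hWlb : ∀ t : ℝ, b t * b t / 4 ≤ W t := by
    intro t
    simp only [hW_def]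
    nlinarith [sq_nonneg (b t / 2 + δ * v t), sq_nonneg (v t), hδsq,
      mul_nonneg (by linarith [hδsq] : (0:ℝ) ≤ κ / 2 - δ ^ 2) (sq_nonneg (v t))]
  -- squeeze: b² → 0
  have hsq_tendsto : Tendsto (fun t => b t * b t) atTop (nhds 0) := by
    have hub : Tendsto (fun t => W 0 * Real.exp (-(2 * δ / 3 * t)) * 4) atTop (nhds 0) := by
      have h1 : Tendsto (fun t : ℝ => 2 * δ / 3 * t) atTop atTop :=
        tendsto_id.const_mul_atTop hα0
      have h1' : Tendsto (fun t : ℝ => -(2 * δ / 3 * t)) atTop atBot := by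
        exact tendsto_neg_atTop_atBot.comp h1
      have h2 : Tendsto (fun t : ℝ => Real.exp (-(2 * δ / 3 * t))) atTop (nhds 0) := by
        simpa [Function.comp_def] using Real.tendsto_exp_atBot.comp h1'
      have h3 := (h2.const_mul (W 0)).mul_const (4:ℝ)
      simpa using h3
    apply tendsto_of_tendsto_of_tendsto_of_le_of_le' tendsto_const_nhds hub
    · filter_upwards with t
      nlinarith [sq_nonneg (b t)]
    · filter_upwards [eventually_ge_atTop (0:ℝ)] with t ht
      have h1 := hWlb t
      have h2 := hWdecay t ht
      linarith
  have hb_tendsto : Tendsto b atTop (nhds 0) := by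
    rw [tendsto_zero_iff_abs_tendsto_zero]
    have habs : ∀ t : ℝ, |b t| = Real.sqrt (b t * b t) := by
      intro t
      rw [← Real.sqrt_mul_self (abs_nonneg (b t)), abs_mul_abs_self]
    have hcomp : Tendsto (fun t => Real.sqrt (b t * b t)) atTop (nhds 0) := by
      have := (Real.continuous_sqrt.tendsto 0).comp hsq_tendsto
      simpa [Function.comp_def] using this
    exact hcomp.congr (fun t => (habs t).symm)
  have h1 : Tendsto ε atTop (nhds (c / κ)) := by
    have h := hb_tendsto.add_const (c / κ)
    rw [zero_add] at h
    exact h.congr (fun t => by simp [hb_def])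
  refine ⟨h1, ?_⟩
  have h2 := h1.abs
  have habsq : |c / κ| = |c| / κ := by rw [abs_div, abs_of_pos hκ]
  rwa [habsq] at h2
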